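/- Every Y ∈ End_F(V) commuting with X belongs to 𝔫^{≥0}; that is, in the block decomposition End_F(V) = ⊕ Hom_F(V_j^i, V_{j'}^{i'}), every nonzero block of an endomorphism commuting with X occurs for a pair with p(i,j) ≥ p(i',j'). -/

import Mathlib

/-- Index type of the standard basis `e(i,j,k)`: triples `(i,j,k)` with
`1 ≤ i ≤ j ≤ r`, `1 ≤ k ≤ d j`. -/
def RIdx (r : ℕ) (d : ℕ → ℕ) : Type :=
  {x : ℕ × ℕ × ℕ //
    1 ≤ x.1 ∧ x.1 ≤ x.2.1 ∧ x.2.1 ≤ r ∧ 1 ≤ x.2.2 ∧ x.2.2 ≤ d x.2.1}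

/-- The weight `p(i,j) = (i−1)(2r−i+2)/2 + (r−j+1)`. -/
def pfun (r i j : ℕ) : ℤ :=
  ((i : ℤ) - 1) * (2 * (r : ℤ) - (i : ℤ) + 2) / 2 + ((r : ℤ) - (j : ℤ) + 1)

/-- `𝔫^{≥t}`: the subspace of endomorphisms all of whose nonzero blocks
`Hom(V_j^i, V_{j'}^{i'})` (equivalently, nonzero matrix entries in the basis `e`)
occur for pairs with `p(i,j) − p(i',j') ≥ t`. -/
def nGE {F : Type*} [Field F] {V : Type*} [AddCommGroup V] [Module F V]
    (r : ℕ) (d : ℕ → ℕ) (e : Module.Basis (RIdx r d) F V) (t : ℤ) :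
    Set (Module.End F V) :=
  {A | ∀ x y : RIdx r d, e.repr (A (e x)) y ≠ 0 →
    t ≤ pfun r x.val.1 x.val.2.1 - pfun r y.val.1 y.val.2.1}

section Aux

variable {F : Type*} [Field F] {V : Type*} [AddCommGroup V] [Module F V]
variable {r : ℕ} {d : ℕ → ℕ}

lemma ridx_ext_iff (a b : RIdx r d) : a = b ↔ a.val.1 = b.val.1 ∧ a.val.2 = b.val.2 := by
  exact Subtype.ext_iff.trans Prod.ext_iff

/-- Single shift lemma: coefficient of `X v` at `y` is the coefficient of `v` at the
shift of `y` by one. -/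
lemma lemA (e : Module.Basis (RIdx r d) F V) (X : Module.End F V)
    (hX0 : ∀ x : RIdx r d, x.val.1 = 1 → X (e x) = 0)
    (hXs : ∀ x y : RIdx r d, x.val.1 = y.val.1 + 1 → x.val.2 = y.val.2 → X (e x) = e y)
    (v : V) (y z : RIdx r d) (h1 : z.val.1 = y.val.1 + 1) (h2 : z.val.2 = y.val.2) :
    e.repr (X v) y = e.repr v z := by
  classical
  have key : (Finsupp.lapply y ∘ₗ ((e.repr : V →ₗ[F] (RIdx r d →₀ F)) ∘ₗ X) : V →ₗ[F] F)
      = Finsupp.lapply z ∘ₗ (e.repr : V →ₗ[F] (RIdx r d →₀ F)) := by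
    apply e.ext
    intro w
    simp only [LinearMap.comp_apply, LinearEquiv.coe_coe, Finsupp.lapply_apply]
    by_cases hw : w.val.1 = 1
    · rw [hX0 w hw]
      simp only [map_zero, Finsupp.zero_apply, Module.Basis.repr_self]
      rw [Finsupp.single_apply, if_neg]
      intro hwz
      have hy1 := y.2.1
      have : w.val.1 = z.val.1 := by rw [hwz]
      omega
    · have hw2 : 2 ≤ w.val.1 := by have := w.2.1; omega
      have hwprop := w.2
      have hwv : (1:ℕ) ≤ w.val.1 - 1 ∧ w.val.1 - 1 ≤ w.val.2.1 ∧ w.val.2.1 ≤ r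
          ∧ 1 ≤ w.val.2.2 ∧ w.val.2.2 ≤ d w.val.2.1 := by
        obtain ⟨a, b, c, dd, ee⟩ := hwprop
        exact ⟨by omega, by omega, c, dd, ee⟩
      set w' : RIdx r d := ⟨(w.val.1 - 1, w.val.2.1, w.val.2.2), hwv⟩ with hw'def
      have hXw : X (e w) = e w' := by
        apply hXs
        · show w.val.1 = w.val.1 - 1 + 1; omega
        · rfl
      rw [hXw]
      simp only [Module.Basis.repr_self]
      rw [Finsupp.single_apply, Finsupp.single_apply]
      have hiff : w' = y ↔ w = z := by
        rw [ridx_ext_iff, ridx_ext_iff]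
        constructor
        · rintro ⟨hA, hB⟩
          refine ⟨by simp only [hw'def] at hA; omega, ?_⟩
          rw [h2]; exact hB
        · rintro ⟨hA, hB⟩
          refine ⟨by simp only [hw'def]; omega, ?_⟩
          show w.val.2 = y.val.2
          rw [hB, h2]
      by_cases hcase : w' = y
      · rw [if_pos hcase, if_pos (hiff.mp hcase)]
      · rw [if_neg hcase, if_neg (fun h => hcase (hiff.mpr h))]
  exact LinearMap.congr_fun key v

/-- Vanishing lemma: coefficient of `X v` at `y` with `y.i = y.j` vanishes. -/
lemma lemB (e : Module.Basis (RIdx r d) F V) (X : Module.End F V)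
    (hX0 : ∀ x : RIdx r d, x.val.1 = 1 → X (e x) = 0)
    (hXs : ∀ x y : RIdx r d, x.val.1 = y.val.1 + 1 → x.val.2 = y.val.2 → X (e x) = e y)
    (v : V) (y : RIdx r d) (hy : y.val.2.1 = y.val.1) :
    e.repr (X v) y = 0 := by
  classical
  have key : (Finsupp.lapply y ∘ₗ ((e.repr : V →ₗ[F] (RIdx r d →₀ F)) ∘ₗ X) : V →ₗ[F] F)
      = 0 := by
    apply e.ext
    intro w
    simp only [LinearMap.comp_apply, LinearEquiv.coe_coe, Finsupp.lapply_apply,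
      LinearMap.zero_apply]
    by_cases hw : w.val.1 = 1
    · rw [hX0 w hw]; simp
    · have hw2 : 2 ≤ w.val.1 := by have := w.2.1; omega
      have hwprop := w.2
      have hwv : (1:ℕ) ≤ w.val.1 - 1 ∧ w.val.1 - 1 ≤ w.val.2.1 ∧ w.val.2.1 ≤ r
          ∧ 1 ≤ w.val.2.2 ∧ w.val.2.2 ≤ d w.val.2.1 := by
        obtain ⟨a, b, c, dd, ee⟩ := hwprop
        exact ⟨by omega, by omega, c, dd, ee⟩
      set w' : RIdx r d := ⟨(w.val.1 - 1, w.val.2.1, w.val.2.2), hwv⟩ with hw'def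
      have hXw : X (e w) = e w' := by
        apply hXs
        · show w.val.1 = w.val.1 - 1 + 1; omega
        · rfl
      rw [hXw]
      simp only [Module.Basis.repr_self]
      rw [Finsupp.single_apply, if_neg]
      intro hh
      rw [ridx_ext_iff] at hh
      obtain ⟨hA, hB⟩ := hh
      have hj : w.val.2.1 = y.val.2.1 := by rw [← hB]
      have := w.2.2.1
      simp only [hw'def] at hA
      omega
  exact LinearMap.congr_fun key v

/-- Iterated shift: coefficient of `X^m v` at `y` equals coefficient of `v` at shift by `m`. -/
lemma lemC1 (e : Module.Basis (RIdx r d) F V) (X : Module.End F V)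
    (hX0 : ∀ x : RIdx r d, x.val.1 = 1 → X (e x) = 0)
    (hXs : ∀ x y : RIdx r d, x.val.1 = y.val.1 + 1 → x.val.2 = y.val.2 → X (e x) = e y) :
    ∀ (m : ℕ) (v : V) (y z : RIdx r d), z.val.1 = y.val.1 + m → z.val.2 = y.val.2 →
      e.repr ((X ^ m) v) y = e.repr v z := by
  intro m
  induction m with
  | zero =>
    intro v y z h1 h2
    have : z = y := by rw [ridx_ext_iff]; exact ⟨by omega, h2⟩
    rw [this]; simp
  | succ m ih =>
    intro v y z h1 h2
    have hzj : z.val.2.1 = y.val.2.1 := by rw [← h2]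
    have hmid : (1:ℕ) ≤ y.val.1 + m ∧ y.val.1 + m ≤ y.val.2.1 ∧ y.val.2.1 ≤ r
        ∧ 1 ≤ y.val.2.2 ∧ y.val.2.2 ≤ d y.val.2.1 := by
      have hz := z.2
      have hy := y.2
      obtain ⟨a, b, c, dd, ee⟩ := hy
      obtain ⟨a', b', c', dd', ee'⟩ := hz
      refine ⟨by omega, by omega, c, dd, ee⟩
    set w : RIdx r d := ⟨(y.val.1 + m, y.val.2.1, y.val.2.2), hmid⟩ with hwdef
    have hstep : (X ^ (m + 1)) v = (X ^ m) (X v) := by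
      rw [pow_succ]; rfl
    rw [hstep, ih (X v) y w rfl rfl]
    apply lemA e X hX0 hXs
    · show z.val.1 = y.val.1 + m + 1; omega
    · show z.val.2 = (y.val.2.1, y.val.2.2)
      rw [h2]

/-- Iterated vanishing: if `y.j < y.i + m` then the coefficient of `X^m v` at `y` vanishes. -/
lemma lemC2 (e : Module.Basis (RIdx r d) F V) (X : Module.End F V)
    (hX0 : ∀ x : RIdx r d, x.val.1 = 1 → X (e x) = 0)
    (hXs : ∀ x y : RIdx r d, x.val.1 = y.val.1 + 1 → x.val.2 = y.val.2 → X (e x) = e y) :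
    ∀ (m : ℕ) (v : V) (y : RIdx r d), y.val.2.1 < y.val.1 + m →
      e.repr ((X ^ m) v) y = 0 := by
  intro m
  induction m with
  | zero =>
    intro v y h
    have := y.2.2.1
    omega
  | succ m ih =>
    intro v y h
    have hstep : (X ^ (m + 1)) v = (X ^ m) (X v) := by
      rw [pow_succ]; rfl
    rw [hstep]
    by_cases hc : y.val.2.1 < y.val.1 + m
    · exact ih (X v) y hc
    · have heq : y.val.2.1 = y.val.1 + m := by omega
      have hmid : (1:ℕ) ≤ y.val.1 + m ∧ y.val.1 + m ≤ y.val.2.1 ∧ y.val.2.1 ≤ r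
          ∧ 1 ≤ y.val.2.2 ∧ y.val.2.2 ≤ d y.val.2.1 := by
        have hy := y.2
        obtain ⟨a, b, c, dd, ee⟩ := hy
        exact ⟨by omega, by omega, c, dd, ee⟩
      set w : RIdx r d := ⟨(y.val.1 + m, y.val.2.1, y.val.2.2), hmid⟩ with hwdef
      rw [lemC1 e X hX0 hXs m (X v) y w rfl rfl]
      exact lemB e X hX0 hXs v w (by show y.val.2.1 = y.val.1 + m; omega)

/-- `X^m` kills `e x` when `x.i ≤ m`. -/
lemma lemD (e : Module.Basis (RIdx r d) F V) (X : Module.End F V)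
    (hX0 : ∀ x : RIdx r d, x.val.1 = 1 → X (e x) = 0)
    (hXs : ∀ x y : RIdx r d, x.val.1 = y.val.1 + 1 → x.val.2 = y.val.2 → X (e x) = e y) :
    ∀ (m : ℕ) (x : RIdx r d), x.val.1 ≤ m → (X ^ m) (e x) = 0 := by
  intro m
  induction m with
  | zero =>
    intro x h
    have := x.2.1
    omega
  | succ m ih =>
    intro x h
    have hstep : (X ^ (m + 1)) (e x) = (X ^ m) (X (e x)) := by
      rw [pow_succ]; rfl
    rw [hstep]
    by_cases hx : x.val.1 = 1
    · rw [hX0 x hx, map_zero]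
    · have hx2 : 2 ≤ x.val.1 := by have := x.2.1; omega
      have hxv : (1:ℕ) ≤ x.val.1 - 1 ∧ x.val.1 - 1 ≤ x.val.2.1 ∧ x.val.2.1 ≤ r
          ∧ 1 ≤ x.val.2.2 ∧ x.val.2.2 ≤ d x.val.2.1 := by
        obtain ⟨a, b, c, dd, ee⟩ := x.2
        exact ⟨by omega, by omega, c, dd, ee⟩
      set x' : RIdx r d := ⟨(x.val.1 - 1, x.val.2.1, x.val.2.2), hxv⟩
      have hXx : X (e x) = e x' := by
        apply hXs
        · show x.val.1 = x.val.1 - 1 + 1; omega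
        · rfl
      rw [hXx]
      exact ih x' (by show x.val.1 - 1 ≤ m; omega)

/-- `X^m` maps `e x` to `e z` when `x.i = z.i + m` and the other coordinates agree. -/
lemma lemE (e : Module.Basis (RIdx r d) F V) (X : Module.End F V)
    (hX0 : ∀ x : RIdx r d, x.val.1 = 1 → X (e x) = 0)
    (hXs : ∀ x y : RIdx r d, x.val.1 = y.val.1 + 1 → x.val.2 = y.val.2 → X (e x) = e y) :
    ∀ (m : ℕ) (x z : RIdx r d), x.val.1 = z.val.1 + m → x.val.2 = z.val.2 →
      (X ^ m) (e x) = e z := by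
  intro m
  induction m with
  | zero =>
    intro x z h1 h2
    have : x = z := by rw [ridx_ext_iff]; exact ⟨by omega, h2⟩
    rw [this]; simp
  | succ m ih =>
    intro x z h1 h2
    have hstep : (X ^ (m + 1)) (e x) = (X ^ m) (X (e x)) := by
      rw [pow_succ]; rfl
    have hz1 := z.2.1
    have hx2 : 2 ≤ x.val.1 := by omega
    have hxv : (1:ℕ) ≤ x.val.1 - 1 ∧ x.val.1 - 1 ≤ x.val.2.1 ∧ x.val.2.1 ≤ r
        ∧ 1 ≤ x.val.2.2 ∧ x.val.2.2 ≤ d x.val.2.1 := by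
      obtain ⟨a, b, c, dd, ee⟩ := x.2
      exact ⟨by omega, by omega, c, dd, ee⟩
    set x' : RIdx r d := ⟨(x.val.1 - 1, x.val.2.1, x.val.2.2), hxv⟩
    have hXx : X (e x) = e x' := by
      apply hXs
      · show x.val.1 = x.val.1 - 1 + 1; omega
      · rfl
    rw [hstep, hXx]
    apply ih
    · show x.val.1 - 1 = z.val.1 + m; omega
    · show (x.val.2.1, x.val.2.2) = z.val.2
      rw [← h2]

/-- `2 * pfun` has an explicit polynomial form (the division by 2 is exact). -/
lemma two_mul_pfun (r i j : ℕ) :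
    2 * pfun r i j = ((i : ℤ) - 1) * (2 * (r : ℤ) - (i : ℤ) + 2)
      + 2 * ((r : ℤ) - (j : ℤ) + 1) := by
  unfold pfun
  rw [mul_add]
  congr 1
  obtain ⟨k, hk | hk⟩ := Int.even_or_odd' (i : ℤ)
  · rw [hk]
    have h2 : (2 * k - 1) * (2 * (r : ℤ) - 2 * k + 2)
        = 2 * ((2 * k - 1) * ((r : ℤ) - k + 1)) := by ring
    rw [h2, Int.mul_ediv_cancel_left _ (by norm_num)]
  · rw [hk]
    have h2 : (2 * k + 1 - 1) * (2 * (r : ℤ) - (2 * k + 1) + 2)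
        = 2 * (k * (2 * (r : ℤ) - 2 * k + 1)) := by ring
    rw [h2, Int.mul_ediv_cancel_left _ (by norm_num)]

/-- The key arithmetic inequality on weights. -/
lemma pfun_mono {r a b j' j : ℕ}
    (h1a : 1 ≤ a) (haj' : a ≤ j') (hj'r : j' ≤ r)
    (h1b : 1 ≤ b) (hbj : b ≤ j) (hjr : j ≤ r)
    (hab : a ≤ b) (hstep : a + (j - b) ≤ j') :
    pfun r a j' ≤ pfun r b j := by
  have hmain : 2 * pfun r a j' ≤ 2 * pfun r b j := by
    rw [two_mul_pfun, two_mul_pfun]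
    have hZstep : (a : ℤ) + (j : ℤ) - (b : ℤ) ≤ (j' : ℤ) := by
      have : a + j - b ≤ j' := by omega
      omega
    rcases eq_or_lt_of_le hab with heq | hlt
    · subst heq
      have : (j : ℤ) ≤ (j' : ℤ) := by omega
      nlinarith [this]
    · have hZab : (a : ℤ) + 1 ≤ (b : ℤ) := by exact_mod_cast hlt
      have hZbr : (b : ℤ) ≤ (r : ℤ) := by exact_mod_cast le_trans hbj hjr
      have hZaj' : (a : ℤ) ≤ (j' : ℤ) := by exact_mod_cast haj'
      have hZjr : (j : ℤ) ≤ (r : ℤ) := by exact_mod_cast hjr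
      have h1 : (0 : ℤ) ≤ ((r : ℤ) - b) * ((b : ℤ) - a - 1) :=
        mul_nonneg (by omega) (by omega)
      have h2 : (1 : ℤ) ≤ (b : ℤ) - a := by omega
      nlinarith [h1, h2, sq_nonneg ((b : ℤ) - a)]
  omega

end Aux

/-- every endomorphism commuting with `X` lies in `𝔫^{≥0}`. -/
theorem stmt_12 (r : ℕ) (hr : 1 ≤ r) (d : ℕ → ℕ) (hd : 1 ≤ d r)
    (F : Type*) [Field F] [CharZero F] (V : Type*) [AddCommGroup V] [Module F V]
    (e : Module.Basis (RIdx r d) F V) (X : Module.End F V)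
    (hX0 : ∀ x : RIdx r d, x.val.1 = 1 → X (e x) = 0)
    (hXs : ∀ x y : RIdx r d, x.val.1 = y.val.1 + 1 → x.val.2 = y.val.2 →
      X (e x) = e y) :
    ∀ Y : Module.End F V, Y ∘ₗ X = X ∘ₗ Y → Y ∈ nGE r d e 0 := by
  intro Y hYX
  have hc : Commute X Y := by
    show X * Y = Y * X
    rw [Module.End.mul_eq_comp, Module.End.mul_eq_comp, hYX]
  have hcomm : ∀ (m : ℕ) (v : V), (X ^ m) (Y v) = Y ((X ^ m) v) := by
    intro m v
    have := LinearMap.congr_fun ((hc.pow_left m)) v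
    simpa using this
  intro x y hne
  -- Step 1: y.i ≤ x.i
  have h1 : y.val.1 ≤ x.val.1 := by
    by_contra h
    push_neg at h
    set m := x.val.1 with hm
    have hXm : (X ^ m) (e x) = 0 := lemD e X hX0 hXs m x le_rfl
    have hzero : (X ^ m) (Y (e x)) = 0 := by
      rw [hcomm m (e x), hXm, map_zero]
    have hyv : (1:ℕ) ≤ y.val.1 - m ∧ y.val.1 - m ≤ y.val.2.1 ∧ y.val.2.1 ≤ r
        ∧ 1 ≤ y.val.2.2 ∧ y.val.2.2 ≤ d y.val.2.1 := by
      obtain ⟨a, b, c, dd, ee⟩ := y.2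
      exact ⟨by omega, by omega, c, dd, ee⟩
    set y' : RIdx r d := ⟨(y.val.1 - m, y.val.2.1, y.val.2.2), hyv⟩
    have := lemC1 e X hX0 hXs m (Y (e x)) y' y
      (by show y.val.1 = (y.val.1 - m) + m; omega) rfl
    rw [hzero] at this
    simp only [map_zero, Finsupp.zero_apply] at this
    exact hne this.symm
  -- Step 2: y.i + (x.j - x.i) ≤ y.j
  have h2 : y.val.1 + (x.val.2.1 - x.val.1) ≤ y.val.2.1 := by
    by_contra h
    push_neg at h
    set m := x.val.2.1 - x.val.1 with hm
    have hxv : (1:ℕ) ≤ x.val.2.1 ∧ x.val.2.1 ≤ x.val.2.1 ∧ x.val.2.1 ≤ r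
        ∧ 1 ≤ x.val.2.2 ∧ x.val.2.2 ≤ d x.val.2.1 := by
      obtain ⟨a, b, c, dd, ee⟩ := x.2
      exact ⟨by omega, le_rfl, c, dd, ee⟩
    set xh : RIdx r d := ⟨(x.val.2.1, x.val.2.1, x.val.2.2), hxv⟩
    have hE : (X ^ m) (e xh) = e x := by
      apply lemE e X hX0 hXs
      · show x.val.2.1 = x.val.1 + m
        have := x.2.2.1
        omega
      · rfl
    have hYx : Y (e x) = (X ^ m) (Y (e xh)) := by
      rw [hcomm m (e xh), hE]
    have := lemC2 e X hX0 hXs m (Y (e xh)) y h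
    rw [hYx] at hne
    exact hne this
  -- Step 3: arithmetic
  have hy2 := y.2
  have hx2 := x.2
  obtain ⟨hy1, hyij, hyjr, -, -⟩ := hy2
  obtain ⟨hx1, hxij, hxjr, -, -⟩ := hx2
  have := pfun_mono (r := r) hy1 hyij hyjr hx1 hxij hxjr h1 h2
  omega
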